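/- arXiv:2206.02198 — 4 statements merged into one kernel-verified Lean document; each statement's English description precedes it below -/
import Mathlib

section
/- For λ ≥ 0, the vector λ·e_{123'} = (λ, λ, λ, 2λ, 2λ, 2λ, 2λ) ∈ ℝ^7 is an entropy vector of three finite-alphabet random variables if and only if λ = log₂ m for some positive integer m. -/
open Finset

/-- Probability that the discrete random variable `X` (on finite sample space `Fin N`
with probability mass function `p`) takes the value `a`. -/
noncomputable def pr {N : ℕ} (p : Fin N → ℝ) {A : Type} [DecidableEq A]
    (X : Fin N → A) (a : A) : ℝ :=
  ∑ ω, if X ω = a then p ω else 0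

/-- Base-2 Shannon entropy of the random variable `X` under the pmf `p`. -/
noncomputable def ent {N : ℕ} (p : Fin N → ℝ) {A : Type} [Fintype A] [DecidableEq A]
    (X : Fin N → A) : ℝ :=
  -∑ a, pr p X a * Real.logb 2 (pr p X a)

/-- `p` is a probability mass function. -/
def IsDist {N : ℕ} (p : Fin N → ℝ) : Prop :=
  (∀ ω, 0 ≤ p ω) ∧ ∑ ω, p ω = 1

/-- The entropy vector of three finite-alphabet random variables, with components
(H(X₁), H(X₂), H(X₃), H(X₁X₂), H(X₁X₃), H(X₂X₃), H(X₁X₂X₃)). -/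
noncomputable def entVec3 {N a₁ a₂ a₃ : ℕ} (p : Fin N → ℝ)
    (X₁ : Fin N → Fin a₁) (X₂ : Fin N → Fin a₂) (X₃ : Fin N → Fin a₃) : Fin 7 → ℝ :=
  ![ent p X₁, ent p X₂, ent p X₃,
    ent p (fun ω => (X₁ ω, X₂ ω)),
    ent p (fun ω => (X₁ ω, X₃ ω)),
    ent p (fun ω => (X₂ ω, X₃ ω)),
    ent p (fun ω => (X₁ ω, X₂ ω, X₃ ω))]

/-- `h ∈ ℝ⁷` is the entropy vector of some triple of finite-alphabet random variables. -/
def IsEntropic (h : Fin 7 → ℝ) : Prop :=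
  ∃ (N a₁ a₂ a₃ : ℕ) (p : Fin N → ℝ)
    (X₁ : Fin N → Fin a₁) (X₂ : Fin N → Fin a₂) (X₃ : Fin N → Fin a₃),
    IsDist p ∧ entVec3 p X₁ X₂ X₃ = h

noncomputable def e1 : Fin 7 → ℝ := ![1,0,0,1,1,0,1]
noncomputable def e2 : Fin 7 → ℝ := ![0,1,0,1,0,1,1]
noncomputable def e3 : Fin 7 → ℝ := ![0,0,1,0,1,1,1]
noncomputable def e12 : Fin 7 → ℝ := ![1,1,0,1,1,1,1]
noncomputable def e13 : Fin 7 → ℝ := ![1,0,1,1,1,1,1]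
noncomputable def e23 : Fin 7 → ℝ := ![0,1,1,1,1,1,1]
noncomputable def e123 : Fin 7 → ℝ := ![1,1,1,1,1,1,1]
noncomputable def e123' : Fin 7 → ℝ := ![1,1,1,2,2,2,2]

section helpers
variable {N : ℕ} {p : Fin N → ℝ} {A B : Type} [Fintype A] [DecidableEq A] [DecidableEq B]

lemma pr_nonneg (hp : ∀ ω, 0 ≤ p ω) (X : Fin N → A) (a : A) : 0 ≤ pr p X a := by
  apply Finset.sum_nonneg; intro ω _; split <;> simp [hp ω]

lemma sum_pr (hp : ∑ ω, p ω = 1) (X : Fin N → A) : ∑ a, pr p X a = 1 := by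
  unfold pr; rw [Finset.sum_comm]; simpa using hp

lemma pr_comp (X : Fin N → A) (g : A → B) (b : B) :
    pr p (fun ω => g (X ω)) b = ∑ a, if g a = b then pr p X a else 0 := by
  unfold pr
  have : ∀ a : A, (if g a = b then (∑ ω, if X ω = a then p ω else 0) else 0)
      = ∑ ω, if X ω = a then (if g a = b then p ω else 0) else 0 := by
    intro a; split <;> simp
  rw [Finset.sum_congr rfl fun a _ => this a, Finset.sum_comm]
  apply Finset.sum_congr rfl; intro ω _
  rw [Finset.sum_ite_eq univ (X ω) fun a => if g a = b then p ω else 0]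
  simp

lemma pr_le_comp (hp : ∀ ω, 0 ≤ p ω) (X : Fin N → A) (g : A → B) (t : A) :
    pr p X t ≤ pr p (fun ω => g (X ω)) (g t) := by
  calc pr p X t = (if g t = g t then pr p X t else 0) := by simp
    _ ≤ ∑ a, if g a = g t then pr p X a else 0 :=
        Finset.single_le_sum (f := fun a => if g a = g t then pr p X a else 0)
          (fun a _ => by split <;> simp [pr_nonneg hp]) (Finset.mem_univ t)
    _ = pr p (fun ω => g (X ω)) (g t) := (pr_comp X g (g t)).symm

lemma sum_weight [Fintype B] (X : Fin N → A) (g : A → B) (F : B → ℝ) :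
    ∑ b, pr p (fun ω => g (X ω)) b * F b = ∑ a, pr p X a * F (g a) := by
  simp only [pr_comp, Finset.sum_mul, ite_mul, zero_mul]
  rw [Finset.sum_comm]
  apply Finset.sum_congr rfl; intro a _
  rw [Finset.sum_ite_eq univ (g a) fun b => pr p X a * F b]
  simp

lemma ent_log2 (X : Fin N → A) :
    ent p X * Real.log 2 = -∑ a, pr p X a * Real.log (pr p X a) := by
  have h2 : Real.log 2 ≠ 0 := by
    have := Real.log_pos (by norm_num : (1:ℝ) < 2); linarith
  simp only [ent, Real.logb, neg_mul, Finset.sum_mul, neg_inj]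
  apply Finset.sum_congr rfl; intro a _
  field_simp

lemma uniform_ent (X : Fin N → A) (k : ℝ) (hk : 0 < k)
    (hsum : ∑ a, pr p X a = 1) (h : ∀ a, pr p X a = 0 ∨ pr p X a = 1 / k) :
    ent p X = Real.logb 2 k := by
  have : ∀ a, -(pr p X a * Real.logb 2 (pr p X a)) = pr p X a * Real.logb 2 k := by
    intro a
    rcases h a with h0 | h1
    · simp [h0]
    · rw [h1, one_div, Real.logb_inv]; ring
  rw [ent, ← Finset.sum_neg_distrib, Finset.sum_congr rfl fun a _ => this a,
    ← Finset.sum_mul, hsum, one_mul]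

lemma kl_eq {α : Type} [Fintype α] (f g : α → ℝ) (hf0 : ∀ x, 0 ≤ f x)
    (hg0 : ∀ x, 0 ≤ g x) (hf1 : ∑ x, f x = 1) (hg1 : ∑ x, g x = 1)
    (hfg : ∀ x, 0 < f x → 0 < g x)
    (h : ∑ x, f x * Real.log (f x / g x) = 0) : ∀ x, f x = g x := by
  set T : α → ℝ := fun x => f x * Real.log (f x / g x) - f x + g x with hT
  have hT0 : ∀ x ∈ Finset.univ, 0 ≤ T x := by
    intro x _
    rcases eq_or_lt_of_le (hf0 x) with h0 | h0
    · simp [hT, ← h0, hg0 x]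
    · have hg := hfg x h0
      have hlog : Real.log (g x / f x) ≤ g x / f x - 1 :=
        Real.log_le_sub_one_of_pos (by positivity)
      have hlog2 : Real.log (f x / g x) = - Real.log (g x / f x) := by
        rw [Real.log_div (ne_of_gt h0) (ne_of_gt hg), Real.log_div (ne_of_gt hg) (ne_of_gt h0)]
        ring
      have : g x / f x * f x = g x := by field_simp
      simp only [hT, hlog2]
      nlinarith [mul_le_mul_of_nonneg_right hlog (le_of_lt h0)]
  have hsum : ∑ x, T x = 0 := by
    simp only [hT, Finset.sum_add_distrib, Finset.sum_sub_distrib, h, hf1, hg1]; ring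
  have hz := (Finset.sum_eq_zero_iff_of_nonneg hT0).mp hsum
  intro x
  have hx := hz x (Finset.mem_univ x)
  rcases eq_or_lt_of_le (hf0 x) with h0 | h0
  · simp [hT, ← h0] at hx; linarith [hx]
  · have hg := hfg x h0
    by_contra hne
    have hr : g x / f x ≠ 1 := by
      intro h1
      exact hne (by field_simp at h1; linarith)
    have hlog : Real.log (g x / f x) < g x / f x - 1 :=
      Real.log_lt_sub_one_of_pos (by positivity) hr
    have hlog2 : Real.log (f x / g x) = - Real.log (g x / f x) := by
      rw [Real.log_div (ne_of_gt h0) (ne_of_gt hg), Real.log_div (ne_of_gt hg) (ne_of_gt h0)]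
      ring
    have hc : g x / f x * f x = g x := by field_simp
    simp only [hT, hlog2] at hx
    nlinarith [mul_lt_mul_of_pos_right hlog h0]

lemma det_eq {α : Type} [Fintype α] (f g : α → ℝ) (hf0 : ∀ x, 0 ≤ f x)
    (hle : ∀ x, f x ≤ g x)
    (h : ∑ x, f x * Real.log (g x / f x) = 0) : ∀ x, 0 < f x → f x = g x := by
  have hT0 : ∀ x ∈ Finset.univ, 0 ≤ f x * Real.log (g x / f x) := by
    intro x _
    rcases eq_or_lt_of_le (hf0 x) with h0 | h0
    · simp [← h0]
    · have h1 : 1 ≤ g x / f x := (one_le_div h0).mpr (hle x)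
      have := Real.log_nonneg h1
      positivity
  have hz := (Finset.sum_eq_zero_iff_of_nonneg hT0).mp h
  intro x h0
  have hx := hz x (Finset.mem_univ x)
  have h1 : 1 ≤ g x / f x := (one_le_div h0).mpr (hle x)
  have hlogz : Real.log (g x / f x) = 0 := by
    rcases mul_eq_zero.mp hx with h' | h'
    · linarith
    · exact h'
  have : g x / f x = 1 := by
    rcases (Real.log_eq_zero).mp hlogz with h' | h' | h' <;> first | linarith | exact h'
  field_simp at this
  linarith

lemma func_of_ent_eq {N : ℕ} {p : Fin N → ℝ} {A B : Type} [Fintype A] [DecidableEq A]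
    [Fintype B] [DecidableEq B]
    (hp0 : ∀ ω, 0 ≤ p ω) (X : Fin N → A) (g : A → B)
    (h : ent p X = ent p (fun ω => g (X ω))) :
    ∀ t, 0 < pr p X t → pr p X t = pr p (fun ω => g (X ω)) (g t) := by
  have hle : ∀ t, pr p X t ≤ pr p (fun ω => g (X ω)) (g t) := pr_le_comp hp0 X g
  have hf0 : ∀ t, 0 ≤ pr p X t := pr_nonneg hp0 X
  apply det_eq _ _ hf0 hle
  have e1 := ent_log2 (p := p) X
  have e2 := ent_log2 (p := p) (fun ω => g (X ω))
  have e3 := sum_weight (p := p) X g (fun b => Real.log (pr p (fun ω => g (X ω)) b))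
  have e5 : ∀ t, pr p X t * Real.log (pr p (fun ω => g (X ω)) (g t) / pr p X t)
      = pr p X t * Real.log (pr p (fun ω => g (X ω)) (g t))
        - pr p X t * Real.log (pr p X t) := by
    intro t
    rcases eq_or_lt_of_le (hf0 t) with h0 | h0
    · simp [← h0]
    · have hG : 0 < pr p (fun ω => g (X ω)) (g t) := lt_of_lt_of_le h0 (hle t)
      rw [Real.log_div (ne_of_gt hG) (ne_of_gt h0)]
      ring
  rw [Finset.sum_congr rfl fun t _ => e5 t, Finset.sum_sub_distrib, ← e3]
  have hh : ent p X * Real.log 2 = ent p (fun ω => g (X ω)) * Real.log 2 := by rw [h]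
  rw [e1, e2] at hh
  linarith

lemma indep_of_ent_add {N : ℕ} {p : Fin N → ℝ} {A B : Type} [Fintype A] [DecidableEq A]
    [Fintype B] [DecidableEq B]
    (hp0 : ∀ ω, 0 ≤ p ω) (hp1 : ∑ ω, p ω = 1) (X : Fin N → A) (Y : Fin N → B)
    (h : ent p (fun ω => (X ω, Y ω)) = ent p X + ent p Y) :
    ∀ v : A × B, pr p (fun ω => (X ω, Y ω)) v = pr p X v.1 * pr p Y v.2 := by
  have hXfst : pr p (fun ω => Prod.fst ((fun ω' => (X ω', Y ω')) ω)) = pr p X := rfl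
  have hYsnd : pr p (fun ω => Prod.snd ((fun ω' => (X ω', Y ω')) ω)) = pr p Y := rfl
  have hf0 : ∀ v, 0 ≤ pr p (fun ω => (X ω, Y ω)) v := pr_nonneg hp0 _
  have hfg : ∀ v : A × B, 0 < pr p (fun ω => (X ω, Y ω)) v →
      0 < pr p X v.1 * pr p Y v.2 := by
    intro v hv
    have l1 := pr_le_comp hp0 (fun ω => (X ω, Y ω)) Prod.fst v
    have l2 := pr_le_comp hp0 (fun ω => (X ω, Y ω)) Prod.snd v
    rw [hXfst] at l1
    rw [hYsnd] at l2
    exact mul_pos (lt_of_lt_of_le hv l1) (lt_of_lt_of_le hv l2)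
  apply kl_eq _ _ hf0
    (fun v => mul_nonneg (pr_nonneg hp0 X v.1) (pr_nonneg hp0 Y v.2))
    (sum_pr hp1 _) ?hg1 hfg ?hsum
  case hg1 =>
    rw [Fintype.sum_prod_type]
    have : ∀ a, ∑ b, pr p X a * pr p Y b = pr p X a := by
      intro a
      rw [← Finset.mul_sum, sum_pr hp1 Y, mul_one]
    rw [Finset.sum_congr rfl fun a _ => this a, sum_pr hp1 X]
  case hsum =>
    have e0 := ent_log2 (p := p) (fun ω => (X ω, Y ω))
    have e1 := ent_log2 (p := p) X
    have e2 := ent_log2 (p := p) Y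
    have w1 := sum_weight (p := p) (fun ω => (X ω, Y ω)) Prod.fst
      (fun a => Real.log (pr p X a))
    have w2 := sum_weight (p := p) (fun ω => (X ω, Y ω)) Prod.snd
      (fun b => Real.log (pr p Y b))
    rw [hXfst] at w1
    rw [hYsnd] at w2
    have e5 : ∀ v : A × B, pr p (fun ω => (X ω, Y ω)) v *
        Real.log (pr p (fun ω => (X ω, Y ω)) v / (pr p X v.1 * pr p Y v.2))
        = pr p (fun ω => (X ω, Y ω)) v * Real.log (pr p (fun ω => (X ω, Y ω)) v)
          - pr p (fun ω => (X ω, Y ω)) v * Real.log (pr p X v.1)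
          - pr p (fun ω => (X ω, Y ω)) v * Real.log (pr p Y v.2) := by
      intro v
      rcases eq_or_lt_of_le (hf0 v) with h0 | h0
      · simp [← h0]
      · have hg := hfg v h0
        have hx : 0 < pr p X v.1 := by
          rcases mul_pos_iff.mp hg with ⟨h1, _⟩ | ⟨h1, h2⟩
          · exact h1
          · exact absurd h2 (not_lt.mpr (pr_nonneg hp0 Y v.2))
        have hy : 0 < pr p Y v.2 := by
          rcases mul_pos_iff.mp hg with ⟨_, h2⟩ | ⟨h1, _⟩
          · exact h2
          · exact absurd h1 (not_lt.mpr (pr_nonneg hp0 X v.1))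
        rw [Real.log_div (ne_of_gt h0) (ne_of_gt hg),
          Real.log_mul (ne_of_gt hx) (ne_of_gt hy)]
        ring
    rw [Finset.sum_congr rfl fun v _ => e5 v, Finset.sum_sub_distrib,
      Finset.sum_sub_distrib, ← w1, ← w2]
    have hh : ent p (fun ω => (X ω, Y ω)) * Real.log 2
        = (ent p X + ent p Y) * Real.log 2 := by rw [h]
    rw [e0, add_mul, e1, e2] at hh
    linarith

end helpers

/-- For λ ≥ 0, the vector λ·e_{123'} is entropic iff λ = log₂ m for some positive integer m. -/
theorem stmt2 (l : ℝ) (hl : 0 ≤ l) :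
    IsEntropic (l • e123') ↔ ∃ m : ℕ, 0 < m ∧ l = Real.logb 2 (m : ℝ) := by
  constructor
  · rintro ⟨N, a₁, a₂, a₃, p, X1, X2, X3, ⟨hp0, hp1⟩, hvec⟩
    have hv : ∀ i : Fin 7, entVec3 p X1 X2 X3 i = l * e123' i := by
      intro i; rw [hvec]; simp
    have H1 : ent p X1 = l := by
      have := hv 0; simpa [entVec3, e123'] using this
    have H2 : ent p X2 = l := by
      have := hv 1; simpa [entVec3, e123'] using this
    have H3 : ent p X3 = l := by
      have := hv 2; simpa [entVec3, e123'] using this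
    have H12 : ent p (fun ω => (X1 ω, X2 ω)) = l * 2 := by
      have := hv 3; simpa [entVec3, e123'] using this
    have H13 : ent p (fun ω => (X1 ω, X3 ω)) = l * 2 := by
      have := hv 4; simpa [entVec3, e123'] using this
    have H23 : ent p (fun ω => (X2 ω, X3 ω)) = l * 2 := by
      have := hv 5; simpa [entVec3, e123'] using this
    have H123 : ent p (fun ω => (X1 ω, X2 ω, X3 ω)) = l * 2 := by
      have := hv 6; simpa [entVec3, e123'] using this
    -- pairwise independence
    have I12 := indep_of_ent_add hp0 hp1 X1 X2 (by rw [H12, H1, H2]; ring)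
    have I13 := indep_of_ent_add hp0 hp1 X1 X3 (by rw [H13, H1, H3]; ring)
    have I23 := indep_of_ent_add hp0 hp1 X2 X3 (by rw [H23, H2, H3]; ring)
    -- functional dependence of each pair on the triple
    have D13 : ∀ t : Fin a₁ × Fin a₂ × Fin a₃,
        0 < pr p (fun ω => (X1 ω, X2 ω, X3 ω)) t →
        pr p (fun ω => (X1 ω, X2 ω, X3 ω)) t
          = pr p (fun ω => (X1 ω, X3 ω)) (t.1, t.2.2) :=
      func_of_ent_eq hp0 (fun ω => (X1 ω, X2 ω, X3 ω)) (fun t => (t.1, t.2.2))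
        (by rw [H123]; exact H13.symm)
    have D23 : ∀ t : Fin a₁ × Fin a₂ × Fin a₃,
        0 < pr p (fun ω => (X1 ω, X2 ω, X3 ω)) t →
        pr p (fun ω => (X1 ω, X2 ω, X3 ω)) t
          = pr p (fun ω => (X2 ω, X3 ω)) (t.2.1, t.2.2) :=
      func_of_ent_eq hp0 (fun ω => (X1 ω, X2 ω, X3 ω)) (fun t => (t.2.1, t.2.2))
        (by rw [H123]; exact H23.symm)
    -- key: all positive masses of X1 and X2 agree
    have key : ∀ (a : Fin a₁) (b : Fin a₂), 0 < pr p X1 a → 0 < pr p X2 b →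
        pr p X1 a = pr p X2 b := by
      intro a b ha hb
      have h12 : 0 < pr p (fun ω => (X1 ω, X2 ω)) (a, b) := by
        rw [I12 (a, b)]; exact mul_pos ha hb
      have hex : ∃ t : Fin a₁ × Fin a₂ × Fin a₃,
          ((t.1, t.2.1) = (a, b)) ∧ 0 < pr p (fun ω => (X1 ω, X2 ω, X3 ω)) t := by
        by_contra hc
        push_neg at hc
        have hz : pr p (fun ω => (X1 ω, X2 ω)) (a, b) = 0 := by
          rw [pr_comp (fun ω => (X1 ω, X2 ω, X3 ω)) (fun t => (t.1, t.2.1)) (a, b)]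
          apply Finset.sum_eq_zero
          intro t _
          split
          case isTrue h =>
            exact le_antisymm (hc t h) (pr_nonneg hp0 _ t)
          case isFalse => rfl
        rw [hz] at h12
        exact lt_irrefl 0 h12
      obtain ⟨t, hπ, hq⟩ := hex
      rw [Prod.mk.injEq] at hπ
      have h3 : 0 < pr p X3 t.2.2 := by
        have := pr_le_comp hp0 (fun ω => (X1 ω, X2 ω, X3 ω)) (fun t => t.2.2) t
        exact lt_of_lt_of_le hq this
      have e13 : pr p X1 t.1 * pr p X3 t.2.2 = pr p X2 t.2.1 * pr p X3 t.2.2 := by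
        rw [← I13 (t.1, t.2.2), ← I23 (t.2.1, t.2.2), ← D13 t hq, ← D23 t hq]
      have := mul_right_cancel₀ (ne_of_gt h3) e13
      rw [hπ.1, hπ.2] at this
      exact this
    -- existence of positive masses
    have hex1 : ∃ a, 0 < pr p X1 a := by
      by_contra hc
      push_neg at hc
      have : ∑ a, pr p X1 a = 0 :=
        Finset.sum_eq_zero fun a _ => le_antisymm (hc a) (pr_nonneg hp0 X1 a)
      rw [sum_pr hp1 X1] at this
      norm_num at this
    have hex2 : ∃ b, 0 < pr p X2 b := by
      by_contra hc
      push_neg at hc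
      have : ∑ b, pr p X2 b = 0 :=
        Finset.sum_eq_zero fun b _ => le_antisymm (hc b) (pr_nonneg hp0 X2 b)
      rw [sum_pr hp1 X2] at this
      norm_num at this
    obtain ⟨a0, ha0⟩ := hex1
    obtain ⟨b0, hb0⟩ := hex2
    have hall : ∀ a, pr p X1 a ≠ 0 → pr p X1 a = pr p X1 a0 := by
      intro a ha
      have ha' : 0 < pr p X1 a := lt_of_le_of_ne (pr_nonneg hp0 X1 a) (Ne.symm ha)
      rw [key a b0 ha' hb0, ← key a0 b0 ha0 hb0]
    set S : Finset (Fin a₁) := Finset.univ.filter (fun a => pr p X1 a ≠ 0) with hS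
    have hm0 : 0 < S.card := by
      apply Finset.card_pos.mpr
      exact ⟨a0, Finset.mem_filter.mpr ⟨Finset.mem_univ a0, ne_of_gt ha0⟩⟩
    have hsum1 : ∑ a ∈ S, pr p X1 a = 1 := by
      rw [hS, Finset.sum_filter_ne_zero, sum_pr hp1 X1]
    have hconst : ∑ a ∈ S, pr p X1 a = (S.card : ℝ) * pr p X1 a0 := by
      rw [Finset.sum_congr rfl fun a ha => hall a (Finset.mem_filter.mp ha).2,
        Finset.sum_const, nsmul_eq_mul]
    have hval : pr p X1 a0 = 1 / (S.card : ℝ) := by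
      have hc : (0:ℝ) < (S.card : ℝ) := by exact_mod_cast hm0
      field_simp
      rw [mul_comm, ← hconst]
      exact hsum1
    have huni : ∀ a, pr p X1 a = 0 ∨ pr p X1 a = 1 / (S.card : ℝ) := by
      intro a
      by_cases h : pr p X1 a = 0
      · exact Or.inl h
      · exact Or.inr ((hall a h).trans hval)
    have hcardR : (0:ℝ) < (S.card : ℝ) := by exact_mod_cast hm0
    refine ⟨S.card, hm0, ?_⟩
    rw [← H1, uniform_ent X1 (S.card : ℝ) hcardR (sum_pr hp1 X1) huni]
  · rintro ⟨m, hm, rfl⟩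
    haveI : NeZero m := ⟨hm.ne'⟩
    have hmR : (0:ℝ) < m := by exact_mod_cast hm
    set c0 : ℝ := ((m:ℝ)*m)⁻¹ with hc0
    set p : Fin (m*m) → ℝ := fun _ => c0 with hp
    have hcond : ∀ (i j c : Fin m), (i + j = c) ↔ (j = c - i) := by
      intro i j c
      constructor <;> intro h
      · exact eq_sub_iff_add_eq'.mpr h
      · exact eq_sub_iff_add_eq'.mp h
    have pr_unif : ∀ {A : Type} [DecidableEq A] (Y : Fin m × Fin m → A) (v : A),
        pr p (fun ω => Y (finProdFinEquiv.symm ω)) v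
          = ∑ ij : Fin m × Fin m, if Y ij = v then c0 else 0 := by
      intro A _ Y v
      unfold pr
      rw [← Equiv.sum_comp finProdFinEquiv
        (fun ω => if Y (finProdFinEquiv.symm ω) = v then p ω else 0)]
      simp [hp]
    have hpsum : ∑ ω : Fin (m*m), p ω = 1 := by
      simp only [hp, hc0, Finset.sum_const, Finset.card_univ, Fintype.card_fin,
        nsmul_eq_mul]
      push_cast
      field_simp
    refine ⟨m*m, m, m, m, p,
      fun ω => (finProdFinEquiv.symm ω).1, fun ω => (finProdFinEquiv.symm ω).2,
      fun ω => (finProdFinEquiv.symm ω).1 + (finProdFinEquiv.symm ω).2,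
      ⟨fun ω => by positivity, hpsum⟩, ?_⟩
    have h1 : ∀ a : Fin m, pr p (fun ω => (finProdFinEquiv.symm ω).1) a = 1/(m:ℝ) := by
      intro a
      rw [pr_unif (fun ij => ij.1) a, Fintype.sum_prod_type]
      have e1 : ∀ i : Fin m, (∑ _j : Fin m, if i = a then c0 else 0)
          = if i = a then (m:ℝ) * c0 else 0 := by
        intro i
        split <;> simp [Finset.sum_const, Finset.card_univ]
      rw [Finset.sum_congr rfl fun i _ => e1 i,
        Finset.sum_ite_eq' Finset.univ a fun _ => (m:ℝ)*c0]
      simp only [Finset.mem_univ, if_true, hc0]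
      field_simp
    have h2 : ∀ a : Fin m, pr p (fun ω => (finProdFinEquiv.symm ω).2) a = 1/(m:ℝ) := by
      intro a
      rw [pr_unif (fun ij => ij.2) a, Fintype.sum_prod_type, Finset.sum_comm]
      have e1 : ∀ i : Fin m, (∑ _j : Fin m, if i = a then c0 else 0)
          = if i = a then (m:ℝ) * c0 else 0 := by
        intro i
        split <;> simp [Finset.sum_const, Finset.card_univ]
      rw [Finset.sum_congr rfl fun i _ => e1 i,
        Finset.sum_ite_eq' Finset.univ a fun _ => (m:ℝ)*c0]
      simp only [Finset.mem_univ, if_true, hc0]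
      field_simp
    have h3 : ∀ a : Fin m,
        pr p (fun ω => (finProdFinEquiv.symm ω).1 + (finProdFinEquiv.symm ω).2) a
          = 1/(m:ℝ) := by
      intro a
      rw [pr_unif (fun ij => ij.1 + ij.2) a]
      rw [Fintype.sum_prod_type]
      have : ∀ i : Fin m, (∑ j : Fin m, if i + j = a then c0 else 0) = c0 := by
        intro i
        simp only [hcond]
        rw [Finset.sum_ite_eq' Finset.univ (a - i) (fun _ => c0)]
        simp
      rw [Finset.sum_congr rfl fun i _ => this i]
      simp only [Finset.sum_const, Finset.card_univ, Fintype.card_fin, nsmul_eq_mul, hc0]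
      field_simp
    have h12 : ∀ v : Fin m × Fin m,
        pr p (fun ω => ((finProdFinEquiv.symm ω).1, (finProdFinEquiv.symm ω).2)) v
          = 1/((m:ℝ)*m) := by
      intro v
      rw [pr_unif (fun ij => (ij.1, ij.2)) v]
      simp only [Prod.mk.eta]
      rw [Finset.sum_ite_eq' Finset.univ v (fun _ => c0)]
      simp [hc0]
    have h13 : ∀ v : Fin m × Fin m,
        pr p (fun ω => ((finProdFinEquiv.symm ω).1,
          (finProdFinEquiv.symm ω).1 + (finProdFinEquiv.symm ω).2)) v
          = 1/((m:ℝ)*m) := by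
      intro ⟨a, c⟩
      rw [pr_unif (fun ij => (ij.1, ij.1 + ij.2)) (a, c)]
      rw [Finset.sum_eq_single (a, c - a)]
      · have : a + (c - a) = c := by
          exact eq_sub_iff_add_eq'.mp rfl
        simp [this, hc0]
      · rintro ⟨i, j⟩ _ hne
        rw [if_neg]
        intro h
        rw [Prod.mk.injEq] at h
        obtain ⟨rfl, h'⟩ := h
        exact hne (by rw [Prod.mk.injEq]; exact ⟨rfl, (hcond _ _ _).mp h'⟩)
      · intro h; exact absurd (Finset.mem_univ _) h
    have h23 : ∀ v : Fin m × Fin m,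
        pr p (fun ω => ((finProdFinEquiv.symm ω).2,
          (finProdFinEquiv.symm ω).1 + (finProdFinEquiv.symm ω).2)) v
          = 1/((m:ℝ)*m) := by
      intro ⟨b, c⟩
      rw [pr_unif (fun ij => (ij.2, ij.1 + ij.2)) (b, c)]
      rw [Finset.sum_eq_single (c - b, b)]
      · have : c - b + b = c := by
          exact sub_add_cancel c b
        simp [this, hc0]
      · rintro ⟨i, j⟩ _ hne
        rw [if_neg]
        intro h
        rw [Prod.mk.injEq] at h
        obtain ⟨rfl, h'⟩ := h
        have hi : i = c - j := (hcond _ _ _).mp (by rw [add_comm]; exact h')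
        exact hne (by rw [Prod.mk.injEq]; exact ⟨hi, rfl⟩)
      · intro h; exact absurd (Finset.mem_univ _) h
    have h123 : ∀ v : Fin m × Fin m × Fin m,
        pr p (fun ω => ((finProdFinEquiv.symm ω).1, (finProdFinEquiv.symm ω).2,
          (finProdFinEquiv.symm ω).1 + (finProdFinEquiv.symm ω).2)) v = 0 ∨
        pr p (fun ω => ((finProdFinEquiv.symm ω).1, (finProdFinEquiv.symm ω).2,
          (finProdFinEquiv.symm ω).1 + (finProdFinEquiv.symm ω).2)) v
          = 1/((m:ℝ)*m) := by
      intro ⟨a, b, c⟩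
      rw [pr_unif (fun ij => (ij.1, ij.2, ij.1 + ij.2)) (a, b, c)]
      by_cases hab : a + b = c
      · right
        rw [Finset.sum_eq_single (a, b)]
        · simp [hab, hc0]
        · rintro ⟨i, j⟩ _ hne
          rw [if_neg]
          intro h
          simp only [Prod.mk.injEq] at h
          exact hne (by rw [Prod.mk.injEq]; exact ⟨h.1, h.2.1⟩)
        · intro h; exact absurd (Finset.mem_univ _) h
      · left
        apply Finset.sum_eq_zero
        rintro ⟨i, j⟩ _
        rw [if_neg]
        intro h
        simp only [Prod.mk.injEq] at h
        obtain ⟨rfl, rfl, h3⟩ := h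
        exact hab h3
    have hlog2 : Real.logb 2 ((m:ℝ)*m) = Real.logb 2 (m:ℝ) * 2 := by
      rw [Real.logb_mul (ne_of_gt hmR) (ne_of_gt hmR)]; ring
    have hmm : (0:ℝ) < (m:ℝ)*m := by positivity
    funext i
    fin_cases i <;>
      simp only [entVec3, Matrix.cons_val_zero, Matrix.cons_val_one, Matrix.head_cons,
        Matrix.cons_val_fin_one, Pi.smul_apply, smul_eq_mul, e123',
        Matrix.cons_val', Matrix.empty_val', Matrix.cons_val_fin_one] <;>
      [ (rw [uniform_ent _ _ hmR (sum_pr hpsum _) (fun a => Or.inr (h1 a))]; simp);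
        (rw [uniform_ent _ _ hmR (sum_pr hpsum _) (fun a => Or.inr (h2 a))]; simp);
        (rw [uniform_ent _ _ hmR (sum_pr hpsum _) (fun a => Or.inr (h3 a))]; simp);
        (rw [uniform_ent _ _ hmm (sum_pr hpsum _) (fun v => Or.inr (h12 v)), hlog2]; norm_num);
        (rw [uniform_ent _ _ hmm (sum_pr hpsum _) (fun v => Or.inr (h13 v)), hlog2]; norm_num);
        (rw [uniform_ent _ _ hmm (sum_pr hpsum _) (fun v => Or.inr (h23 v)), hlog2]; norm_num);
        (rw [uniform_ent _ _ hmm (sum_pr hpsum _) (h123), hlog2]; norm_num)]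
end

section
/- For all λ_1, λ_2, λ_3 ≥ 0 and every positive integer m, the vector λ_1·e_1 + λ_2·e_2 + λ_3·e_3 + (log₂ m)·e_{123'} ∈ ℝ^7 is an entropy vector of three finite-alphabet random variables. -/
open Finset

section Lemmas
open Function


noncomputable def prG {Ω : Type} [Fintype Ω] (p : Ω → ℝ) {A : Type} [DecidableEq A]
    (X : Ω → A) (a : A) : ℝ :=
  ∑ ω, if X ω = a then p ω else 0

noncomputable def entG {Ω : Type} [Fintype Ω] (p : Ω → ℝ) {A : Type} [Fintype A]
    [DecidableEq A] (X : Ω → A) : ℝ :=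
  -∑ a, prG p X a * Real.logb 2 (prG p X a)

lemma prG_nonneg {Ω : Type} [Fintype Ω] {p : Ω → ℝ} (hp : ∀ ω, 0 ≤ p ω)
    {A : Type} [DecidableEq A] (X : Ω → A) (a : A) : 0 ≤ prG p X a := by
  apply Finset.sum_nonneg; intro ω _; split_ifs <;> simp [hp ω]

lemma sum_prG {Ω : Type} [Fintype Ω] (p : Ω → ℝ) {A : Type} [Fintype A] [DecidableEq A]
    (X : Ω → A) : ∑ a, prG p X a = ∑ ω, p ω := by
  unfold prG
  rw [Finset.sum_comm]
  simp [Finset.sum_ite_eq]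

lemma prG_id {Ω : Type} [Fintype Ω] [DecidableEq Ω] (p : Ω → ℝ) (a : Ω) :
    prG p id a = p a := by
  simp [prG, Finset.sum_ite_eq']

lemma prG_comp_inj {Ω : Type} [Fintype Ω] (p : Ω → ℝ) {A B : Type} [DecidableEq A]
    [DecidableEq B] {φ : A → B} (hφ : Injective φ) (X : Ω → A) (a : A) :
    prG p (fun ω => φ (X ω)) (φ a) = prG p X a := by
  simp [prG, hφ.eq_iff]

lemma prG_comp_not {Ω : Type} [Fintype Ω] (p : Ω → ℝ) {A B : Type} [DecidableEq B]
    {φ : A → B} (X : Ω → A) {b : B} (hb : ∀ a, φ a ≠ b) :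
    prG p (fun ω => φ (X ω)) b = 0 := by
  simp [prG, hb]

lemma entG_comp_inj {Ω : Type} [Fintype Ω] (p : Ω → ℝ) {A B : Type} [Fintype A] [Fintype B]
    [DecidableEq A] [DecidableEq B] {φ : A → B} (hφ : Injective φ) (X : Ω → A) :
    entG p (fun ω => φ (X ω)) = entG p X := by
  unfold entG
  congr 1
  rw [← Finset.sum_subset (Finset.subset_univ (univ.image φ))
    (fun b _ hb => by
      have : ∀ a, φ a ≠ b := by
        intro a h; exact hb (Finset.mem_image.2 ⟨a, Finset.mem_univ a, h⟩)
      rw [prG_comp_not p X this]; simp),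
    Finset.sum_image (by intro x _ y _ h; exact hφ h)]
  exact Finset.sum_congr rfl fun a _ => by rw [prG_comp_inj p hφ]

lemma entG_reindex {Ω Ω' : Type} [Fintype Ω] [Fintype Ω'] (e : Ω' ≃ Ω) (p : Ω → ℝ)
    {A : Type} [Fintype A] [DecidableEq A] (X : Ω → A) :
    entG (fun ω' => p (e ω')) (fun ω' => X (e ω')) = entG p X := by
  unfold entG
  congr 1
  refine Finset.sum_congr rfl fun a _ => ?_
  have : prG (fun ω' => p (e ω')) (fun ω' => X (e ω')) a = prG p X a :=
    Equiv.sum_comp e (fun ω => if X ω = a then p ω else 0)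
  rw [this]

lemma entG_unique {Ω : Type} [Fintype Ω] {p : Ω → ℝ} (hp : ∑ ω, p ω = 1)
    {A : Type} [Fintype A] [DecidableEq A] [Unique A] (X : Ω → A) : entG p X = 0 := by
  have h : prG p X default = 1 := by
    simp [prG, Subsingleton.elim (X _) default, hp]
  simp [entG, Finset.univ_unique, h]

lemma mul_logb_mul {x y : ℝ} (hx : 0 ≤ x) (hy : 0 ≤ y) :
    (x * y) * Real.logb 2 (x * y)
      = y * (x * Real.logb 2 x) + x * (y * Real.logb 2 y) := by
  rcases eq_or_lt_of_le hx with h | hx'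
  · simp [← h]
  rcases eq_or_lt_of_le hy with h | hy'
  · simp [← h]
  rw [Real.logb_mul hx'.ne' hy'.ne']
  ring

lemma prG_prod {Ω Ω' : Type} [Fintype Ω] [Fintype Ω'] (p : Ω → ℝ) (q : Ω' → ℝ)
    {A B : Type} [DecidableEq A] [DecidableEq B] (f : Ω → A) (g : Ω' → B) (a : A) (b : B) :
    prG (fun ω : Ω × Ω' => p ω.1 * q ω.2) (fun ω => (f ω.1, g ω.2)) (a, b)
      = prG p f a * prG q g b := by
  unfold prG
  rw [Fintype.sum_prod_type, Finset.sum_mul_sum]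
  refine Finset.sum_congr rfl fun x _ => Finset.sum_congr rfl fun y _ => ?_
  by_cases h1 : f x = a <;> by_cases h2 : g y = b <;> simp [h1, h2, Prod.ext_iff]

lemma entG_prod {Ω Ω' : Type} [Fintype Ω] [Fintype Ω'] {p : Ω → ℝ} {q : Ω' → ℝ}
    (hp0 : ∀ ω, 0 ≤ p ω) (hp1 : ∑ ω, p ω = 1) (hq0 : ∀ ω, 0 ≤ q ω) (hq1 : ∑ ω, q ω = 1)
    {A B : Type} [Fintype A] [Fintype B] [DecidableEq A] [DecidableEq B]
    (f : Ω → A) (g : Ω' → B) :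
    entG (fun ω : Ω × Ω' => p ω.1 * q ω.2) (fun ω => (f ω.1, g ω.2))
      = entG p f + entG q g := by
  unfold entG
  rw [Fintype.sum_prod_type]
  have key : ∀ a : A, ∀ b : B,
      prG (fun ω : Ω × Ω' => p ω.1 * q ω.2) (fun ω => (f ω.1, g ω.2)) (a, b)
        * Real.logb 2 (prG (fun ω : Ω × Ω' => p ω.1 * q ω.2) (fun ω => (f ω.1, g ω.2)) (a, b))
      = prG q g b * (prG p f a * Real.logb 2 (prG p f a))
        + prG p f a * (prG q g b * Real.logb 2 (prG q g b)) := by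
    intro a b
    rw [prG_prod]
    exact mul_logb_mul (prG_nonneg hp0 f a) (prG_nonneg hq0 g b)
  calc -∑ a, ∑ b, prG (fun ω : Ω × Ω' => p ω.1 * q ω.2) (fun ω => (f ω.1, g ω.2)) (a, b)
        * Real.logb 2 (prG (fun ω : Ω × Ω' => p ω.1 * q ω.2) (fun ω => (f ω.1, g ω.2)) (a, b))
      = -∑ a, ∑ b, (prG q g b * (prG p f a * Real.logb 2 (prG p f a))
        + prG p f a * (prG q g b * Real.logb 2 (prG q g b))) := by
        congr 1; exact Finset.sum_congr rfl fun a _ => Finset.sum_congr rfl fun b _ => key a b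
    _ = -((∑ b, prG q g b) * (∑ a, prG p f a * Real.logb 2 (prG p f a))
        + (∑ a, prG p f a) * (∑ b, prG q g b * Real.logb 2 (prG q g b))) := by
        congr 1
        simp only [Finset.sum_add_distrib, ← Finset.sum_mul, ← Finset.mul_sum]
    _ = _ := by rw [sum_prG p f, sum_prG q g, hp1, hq1]; ring

lemma prG_fst {Ω Ω' : Type} [Fintype Ω] [Fintype Ω'] (p : Ω → ℝ) {q : Ω' → ℝ}
    (hq1 : ∑ ω, q ω = 1) {A : Type} [DecidableEq A] (f : Ω → A) (a : A) :
    prG (fun ω : Ω × Ω' => p ω.1 * q ω.2) (fun ω => f ω.1) a = prG p f a := by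
  unfold prG
  rw [Fintype.sum_prod_type]
  refine Finset.sum_congr rfl fun x _ => ?_
  by_cases h : f x = a <;> simp [h, ← Finset.mul_sum, hq1]

lemma prG_snd {Ω Ω' : Type} [Fintype Ω] [Fintype Ω'] {p : Ω → ℝ} (hp1 : ∑ ω, p ω = 1)
    (q : Ω' → ℝ) {B : Type} [DecidableEq B] (g : Ω' → B) (b : B) :
    prG (fun ω : Ω × Ω' => p ω.1 * q ω.2) (fun ω => g ω.2) b = prG q g b := by
  unfold prG
  rw [Fintype.sum_prod_type, Finset.sum_comm]
  refine Finset.sum_congr rfl fun y _ => ?_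
  by_cases h : g y = b <;> simp [h, ← Finset.sum_mul, hp1]

lemma entG_fst {Ω Ω' : Type} [Fintype Ω] [Fintype Ω'] (p : Ω → ℝ) {q : Ω' → ℝ}
    (hq1 : ∑ ω, q ω = 1) {A : Type} [Fintype A] [DecidableEq A] (f : Ω → A) :
    entG (fun ω : Ω × Ω' => p ω.1 * q ω.2) (fun ω => f ω.1) = entG p f := by
  unfold entG
  congr 1
  exact Finset.sum_congr rfl fun a _ => by rw [prG_fst p hq1 f a]

lemma entG_snd {Ω Ω' : Type} [Fintype Ω] [Fintype Ω'] {p : Ω → ℝ} (hp1 : ∑ ω, p ω = 1)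
    (q : Ω' → ℝ) {B : Type} [Fintype B] [DecidableEq B] (g : Ω' → B) :
    entG (fun ω : Ω × Ω' => p ω.1 * q ω.2) (fun ω => g ω.2) = entG q g := by
  unfold entG
  congr 1
  exact Finset.sum_congr rfl fun b _ => by rw [prG_snd hp1 q g b]

lemma entG_id_uniform (Ω : Type) [Fintype Ω] [DecidableEq Ω] (h : 0 < Fintype.card Ω) :
    entG (fun _ : Ω => (Fintype.card Ω : ℝ)⁻¹) id = Real.logb 2 (Fintype.card Ω) := by
  have hc : (0:ℝ) < (Fintype.card Ω : ℝ) := by exact_mod_cast h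
  unfold entG
  have : ∀ a : Ω, prG (fun _ : Ω => (Fintype.card Ω : ℝ)⁻¹) id a = (Fintype.card Ω : ℝ)⁻¹ :=
    fun a => prG_id _ a
  simp only [this]
  rw [Finset.sum_const, Finset.card_univ, nsmul_eq_mul, Real.logb_inv]
  field_simp


lemma entG_graft {N M : ℕ} {p : Fin N → ℝ} {q : Fin M → ℝ}
    (hp0 : ∀ ω, 0 ≤ p ω) (hp1 : ∑ ω, p ω = 1) (hq0 : ∀ ω, 0 ≤ q ω) (hq1 : ∑ ω, q ω = 1)
    {A B C : Type} [Fintype A] [Fintype B] [Fintype C] [DecidableEq A] [DecidableEq B]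
    [DecidableEq C] (f : Fin N → A) (g : Fin M → B) {φ : A × B → C} (hφ : Injective φ) :
    ent (fun ω : Fin (N * M) => p (finProdFinEquiv.symm ω).1 * q (finProdFinEquiv.symm ω).2)
      (fun ω => φ (f (finProdFinEquiv.symm ω).1, g (finProdFinEquiv.symm ω).2))
      = ent p f + ent q g := by
  show entG (fun ω : Fin (N * M) => p (finProdFinEquiv.symm ω).1 * q (finProdFinEquiv.symm ω).2)
      (fun ω => φ (f (finProdFinEquiv.symm ω).1, g (finProdFinEquiv.symm ω).2))
      = entG p f + entG q g
  rw [← entG_reindex (finProdFinEquiv : Fin N × Fin M ≃ Fin (N * M))]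
  simp only [Equiv.symm_apply_apply]
  exact (entG_comp_inj _ hφ (fun ω : Fin N × Fin M => (f ω.1, g ω.2))).trans
    (entG_prod hp0 hp1 hq0 hq1 f g)


set_option maxHeartbeats 1000000 in
lemma entG_graft2 {N M : ℕ} {p : Fin N → ℝ} {q : Fin M → ℝ}
    (hp0 : ∀ ω, 0 ≤ p ω) (hp1 : ∑ ω, p ω = 1) (hq0 : ∀ ω, 0 ≤ q ω) (hq1 : ∑ ω, q ω = 1)
    {c1 c2 d1 d2 : ℕ} (f1 : Fin N → Fin c1) (f2 : Fin N → Fin c2)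
    (g1 : Fin M → Fin d1) (g2 : Fin M → Fin d2) :
    ent (fun ω : Fin (N * M) => p (finProdFinEquiv.symm ω).1 * q (finProdFinEquiv.symm ω).2)
      (fun ω => ((finProdFinEquiv (f1 (finProdFinEquiv.symm ω).1, g1 (finProdFinEquiv.symm ω).2) : Fin (c1 * d1)),
        (finProdFinEquiv (f2 (finProdFinEquiv.symm ω).1, g2 (finProdFinEquiv.symm ω).2) : Fin (c2 * d2))))
      = ent p (fun ω => (f1 ω, f2 ω)) + ent q (fun ω => (g1 ω, g2 ω)) := by
  have hpair : Injective (fun u : (Fin c1 × Fin c2) × (Fin d1 × Fin d2) =>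
      ((finProdFinEquiv (u.1.1, u.2.1) : Fin (c1 * d1)),
       (finProdFinEquiv (u.1.2, u.2.2) : Fin (c2 * d2)))) := by
    intro ⟨⟨x1, x2⟩, ⟨y1, y2⟩⟩ ⟨⟨z1, z2⟩, ⟨w1, w2⟩⟩ h
    simp only [Prod.mk.injEq, EmbeddingLike.apply_eq_iff_eq] at h ⊢
    tauto
  exact entG_graft hp0 hp1 hq0 hq1 (fun ω => (f1 ω, f2 ω)) (fun ω => (g1 ω, g2 ω)) hpair

set_option maxHeartbeats 4000000 in
lemma entG_graft3 {N M : ℕ} {p : Fin N → ℝ} {q : Fin M → ℝ}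
    (hp0 : ∀ ω, 0 ≤ p ω) (hp1 : ∑ ω, p ω = 1) (hq0 : ∀ ω, 0 ≤ q ω) (hq1 : ∑ ω, q ω = 1)
    {c1 c2 c3 d1 d2 d3 : ℕ} (f1 : Fin N → Fin c1) (f2 : Fin N → Fin c2) (f3 : Fin N → Fin c3)
    (g1 : Fin M → Fin d1) (g2 : Fin M → Fin d2) (g3 : Fin M → Fin d3) :
    ent (fun ω : Fin (N * M) => p (finProdFinEquiv.symm ω).1 * q (finProdFinEquiv.symm ω).2)
      (fun ω => ((finProdFinEquiv (f1 (finProdFinEquiv.symm ω).1, g1 (finProdFinEquiv.symm ω).2) : Fin (c1 * d1)),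
        (finProdFinEquiv (f2 (finProdFinEquiv.symm ω).1, g2 (finProdFinEquiv.symm ω).2) : Fin (c2 * d2)),
        (finProdFinEquiv (f3 (finProdFinEquiv.symm ω).1, g3 (finProdFinEquiv.symm ω).2) : Fin (c3 * d3))))
      = ent p (fun ω => (f1 ω, f2 ω, f3 ω)) + ent q (fun ω => (g1 ω, g2 ω, g3 ω)) := by
  have htrip : Injective (fun u : (Fin c1 × Fin c2 × Fin c3) × (Fin d1 × Fin d2 × Fin d3) =>
      ((finProdFinEquiv (u.1.1, u.2.1) : Fin (c1 * d1)),
       (finProdFinEquiv (u.1.2.1, u.2.2.1) : Fin (c2 * d2)),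
       (finProdFinEquiv (u.1.2.2, u.2.2.2) : Fin (c3 * d3)))) := by
    intro ⟨⟨x1, x2, x3⟩, ⟨y1, y2, y3⟩⟩ ⟨⟨z1, z2, z3⟩, ⟨w1, w2, w3⟩⟩ h
    simp only [Prod.mk.injEq, EmbeddingLike.apply_eq_iff_eq] at h ⊢
    tauto
  exact entG_graft hp0 hp1 hq0 hq1 (fun ω => (f1 ω, f2 ω, f3 ω)) (fun ω => (g1 ω, g2 ω, g3 ω)) htrip

set_option maxHeartbeats 1000000 in
lemma entG_graft1 {N M : ℕ} {p : Fin N → ℝ} {q : Fin M → ℝ}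
    (hp0 : ∀ ω, 0 ≤ p ω) (hp1 : ∑ ω, p ω = 1) (hq0 : ∀ ω, 0 ≤ q ω) (hq1 : ∑ ω, q ω = 1)
    {c d : ℕ} (f : Fin N → Fin c) (g : Fin M → Fin d) :
    ent (fun ω : Fin (N * M) => p (finProdFinEquiv.symm ω).1 * q (finProdFinEquiv.symm ω).2)
      (fun ω => finProdFinEquiv (f (finProdFinEquiv.symm ω).1, g (finProdFinEquiv.symm ω).2))
      = ent p f + ent q g :=
  entG_graft hp0 hp1 hq0 hq1 f g finProdFinEquiv.injective

set_option maxHeartbeats 1000000 in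
lemma isEntropic_add {h h' : Fin 7 → ℝ} (H : IsEntropic h) (H' : IsEntropic h') :
    IsEntropic (h + h') := by
  obtain ⟨N, a1, a2, a3, p, X1, X2, X3, ⟨hp0, hp1⟩, hX⟩ := H
  obtain ⟨M, b1, b2, b3, q, Y1, Y2, Y3, ⟨hq0, hq1⟩, hY⟩ := H'
  refine ⟨N * M, a1 * b1, a2 * b2, a3 * b3,
    fun ω => p (finProdFinEquiv.symm ω).1 * q (finProdFinEquiv.symm ω).2,
    fun ω => finProdFinEquiv (X1 (finProdFinEquiv.symm ω).1, Y1 (finProdFinEquiv.symm ω).2),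
    fun ω => finProdFinEquiv (X2 (finProdFinEquiv.symm ω).1, Y2 (finProdFinEquiv.symm ω).2),
    fun ω => finProdFinEquiv (X3 (finProdFinEquiv.symm ω).1, Y3 (finProdFinEquiv.symm ω).2),
    ⟨fun ω => mul_nonneg (hp0 _) (hq0 _), ?_⟩, ?_⟩
  · rw [← Equiv.sum_comp (finProdFinEquiv : Fin N × Fin M ≃ Fin (N * M))]
    simp only [Equiv.symm_apply_apply]
    rw [Fintype.sum_prod_type, ← Finset.sum_mul_sum, hp1, hq1, mul_one]
  · rw [← hX, ← hY]
    simp only [entVec3]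
    rw [entG_graft1 hp0 hp1 hq0 hq1 X1 Y1, entG_graft1 hp0 hp1 hq0 hq1 X2 Y2,
      entG_graft1 hp0 hp1 hq0 hq1 X3 Y3, entG_graft2 hp0 hp1 hq0 hq1 X1 X2 Y1 Y2,
      entG_graft2 hp0 hp1 hq0 hq1 X1 X3 Y1 Y3, entG_graft2 hp0 hp1 hq0 hq1 X2 X3 Y2 Y3,
      entG_graft3 hp0 hp1 hq0 hq1 X1 X2 X3 Y1 Y2 Y3]
    simp only [Matrix.cons_add_cons, Matrix.empty_add_empty]

lemma ent_eq_entG {N : ℕ} (p : Fin N → ℝ) {A : Type} [Fintype A] [DecidableEq A]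
    (X : Fin N → A) : ent p X = entG p X := rfl

lemma ent_unique {N : ℕ} {p : Fin N → ℝ} (hp : ∑ ω, p ω = 1) {A : Type} [Fintype A]
    [DecidableEq A] [Unique A] (X : Fin N → A) : ent p X = 0 := entG_unique hp X

lemma ent_comp_inj {N : ℕ} (p : Fin N → ℝ) {A B : Type} [Fintype A] [Fintype B]
    [DecidableEq A] [DecidableEq B] {φ : A → B} (hφ : Injective φ) (X : Fin N → A) :
    ent p (fun ω => φ (X ω)) = ent p X := entG_comp_inj p hφ X

lemma entG_id {Ω : Type} [Fintype Ω] [DecidableEq Ω] (p : Ω → ℝ) :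
    entG p id = -∑ ω, p ω * Real.logb 2 (p ω) := by
  unfold entG
  simp only [prG_id]

lemma entVec3_eq {N a₁ a₂ a₃ : ℕ} (p : Fin N → ℝ)
    (X₁ : Fin N → Fin a₁) (X₂ : Fin N → Fin a₂) (X₃ : Fin N → Fin a₃)
    (v0 v1 v2 v3 v4 v5 v6 : ℝ)
    (H0 : ent p X₁ = v0) (H1 : ent p X₂ = v1) (H2 : ent p X₃ = v2)
    (H3 : ent p (fun ω => (X₁ ω, X₂ ω)) = v3)
    (H4 : ent p (fun ω => (X₁ ω, X₃ ω)) = v4)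
    (H5 : ent p (fun ω => (X₂ ω, X₃ ω)) = v5)
    (H6 : ent p (fun ω => (X₁ ω, X₂ ω, X₃ ω)) = v6) :
    entVec3 p X₁ X₂ X₃ = ![v0, v1, v2, v3, v4, v5, v6] := by
  unfold entVec3
  rw [H0, H1, H2, H3, H4, H5, H6]

/-- Any nonnegative real is the entropy of some finite distribution. -/
lemma exists_ent (l : ℝ) (hl : 0 ≤ l) :
    ∃ (n : ℕ) (p : Fin n → ℝ), IsDist p ∧ ent p (id : Fin n → Fin n) = l := by
  set k := ⌈l⌉₊ with hk
  set n := 2 ^ k with hn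
  have hn0 : 0 < n := pow_pos (by norm_num) k
  haveI : NeZero n := ⟨hn0.ne'⟩
  have hnR : (0:ℝ) < (n:ℝ) := by exact_mod_cast hn0
  set P : ℝ → Fin n → ℝ := fun t ω => (if ω = 0 then 1 - t else 0) + t / n with hP
  have hsum : ∀ t, ∑ ω, P t ω = 1 := by
    intro t
    rw [hP]
    rw [Finset.sum_add_distrib, Finset.sum_ite_eq' Finset.univ (0 : Fin n) (fun _ => 1 - t)]
    simp only [Finset.mem_univ, if_true, Finset.sum_const, Finset.card_univ, Fintype.card_fin,
      nsmul_eq_mul]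
    field_simp
    ring
  set F : ℝ → ℝ := fun t => -∑ ω, (P t ω) * Real.logb 2 (P t ω) with hF
  have hentF : ∀ t, ent (P t) (id : Fin n → Fin n) = F t := by
    intro t
    rw [ent_eq_entG, entG_id]
  have hF0 : F 0 = 0 := by
    rw [hF]
    have : ∀ ω : Fin n, P 0 ω * Real.logb 2 (P 0 ω) = 0 := by
      intro ω
      by_cases h : ω = 0 <;> simp [hP, h]
    simp only [this, Finset.sum_const_zero, neg_zero]
  have hF1 : F 1 = k := by
    have hP1 : ∀ ω : Fin n, P 1 ω = (n:ℝ)⁻¹ := by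
      intro ω
      by_cases h : ω = 0 <;> simp [hP, h, one_div]
    rw [hF]
    simp only [hP1]
    rw [Finset.sum_const, Finset.card_univ, Fintype.card_fin, nsmul_eq_mul, Real.logb_inv]
    have h2 : (n:ℝ) = (2:ℝ) ^ k := by rw [hn]; push_cast; ring
    rw [h2, Real.logb_pow, Real.logb_self_eq_one (by norm_num)]
    field_simp
  have hcont : Continuous F := by
    rw [hF]
    apply Continuous.neg
    apply continuous_finset_sum
    intro ω _
    have hmul : Continuous (fun x : ℝ => x * Real.logb 2 x) := by
      have := Real.continuous_mul_log.div_const (Real.log 2)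
      simpa [Real.logb, mul_div_assoc] using this
    have hPc : Continuous (fun t => P t ω) := by
      rw [hP]
      by_cases h : ω = 0 <;> simp only [h, if_true, if_false] <;> fun_prop
    exact hmul.comp hPc
  have hmem : l ∈ Set.Icc (F 0) (F 1) := by
    rw [hF0, hF1]
    exact ⟨hl, Nat.le_ceil l⟩
  obtain ⟨t, ht, hFt⟩ := intermediate_value_Icc zero_le_one hcont.continuousOn hmem
  refine ⟨n, P t, ⟨?_, hsum t⟩, by rw [hentF t, hFt]⟩
  intro ω
  rw [hP]
  have h1 : 0 ≤ t / (n:ℝ) := div_nonneg ht.1 hnR.le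
  have h2 : 0 ≤ 1 - t := by linarith [ht.2]
  by_cases h : ω = 0 <;> simp [h] <;> linarith

lemma isEntropic_smul_e1 (l : ℝ) (hl : 0 ≤ l) : IsEntropic (l • e1) := by
  obtain ⟨n, p, hdist, hent⟩ := exists_ent l hl
  haveI : Unique (Fin 1 × Fin 1) :=
    ⟨⟨(0, 0)⟩, fun x => by obtain ⟨a, b⟩ := x; rw [Fin.eq_zero a, Fin.eq_zero b]; rfl⟩
  have hs : l • e1 = ![l, 0, 0, l, l, 0, l] := by
    simp only [e1]
    simp [Matrix.smul_cons, Matrix.smul_empty, smul_eq_mul]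
  refine ⟨n, n, 1, 1, p, id, fun _ => 0, fun _ => 0, hdist, ?_⟩
  rw [hs]
  refine entVec3_eq p id (fun _ => 0) (fun _ => 0) l 0 0 l l 0 l hent
    (ent_unique hdist.2 _) (ent_unique hdist.2 _) ?_ ?_ (ent_unique hdist.2 _) ?_
  · exact (ent_comp_inj p (φ := fun a : Fin n => (a, (0 : Fin 1)))
      (fun a b h => congrArg Prod.fst h) id).trans hent
  · exact (ent_comp_inj p (φ := fun a : Fin n => (a, (0 : Fin 1)))
      (fun a b h => congrArg Prod.fst h) id).trans hent
  · exact (ent_comp_inj p (φ := fun a : Fin n => (a, (0 : Fin 1), (0 : Fin 1)))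
      (fun a b h => congrArg Prod.fst h) id).trans hent

lemma isEntropic_smul_e2 (l : ℝ) (hl : 0 ≤ l) : IsEntropic (l • e2) := by
  obtain ⟨n, p, hdist, hent⟩ := exists_ent l hl
  haveI : Unique (Fin 1 × Fin 1) :=
    ⟨⟨(0, 0)⟩, fun x => by obtain ⟨a, b⟩ := x; rw [Fin.eq_zero a, Fin.eq_zero b]; rfl⟩
  have hs : l • e2 = ![0, l, 0, l, 0, l, l] := by
    simp only [e2]
    simp [Matrix.smul_cons, Matrix.smul_empty, smul_eq_mul]
  refine ⟨n, 1, n, 1, p, fun _ => 0, id, fun _ => 0, hdist, ?_⟩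
  rw [hs]
  refine entVec3_eq p (fun _ => 0) id (fun _ => 0) 0 l 0 l 0 l l
    (ent_unique hdist.2 _) hent (ent_unique hdist.2 _) ?_ (ent_unique hdist.2 _) ?_ ?_
  · exact (ent_comp_inj p (φ := fun a : Fin n => ((0 : Fin 1), a))
      (fun a b h => congrArg Prod.snd h) id).trans hent
  · exact (ent_comp_inj p (φ := fun a : Fin n => (a, (0 : Fin 1)))
      (fun a b h => congrArg Prod.fst h) id).trans hent
  · exact (ent_comp_inj p (φ := fun a : Fin n => ((0 : Fin 1), a, (0 : Fin 1)))
      (fun a b h => congrArg (fun u => u.2.1) h) id).trans hent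

lemma isEntropic_smul_e3 (l : ℝ) (hl : 0 ≤ l) : IsEntropic (l • e3) := by
  obtain ⟨n, p, hdist, hent⟩ := exists_ent l hl
  haveI : Unique (Fin 1 × Fin 1) :=
    ⟨⟨(0, 0)⟩, fun x => by obtain ⟨a, b⟩ := x; rw [Fin.eq_zero a, Fin.eq_zero b]; rfl⟩
  have hs : l • e3 = ![0, 0, l, 0, l, l, l] := by
    simp only [e3]
    simp [Matrix.smul_cons, Matrix.smul_empty, smul_eq_mul]
  refine ⟨n, 1, 1, n, p, fun _ => 0, fun _ => 0, id, hdist, ?_⟩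
  rw [hs]
  refine entVec3_eq p (fun _ => 0) (fun _ => 0) id 0 0 l 0 l l l
    (ent_unique hdist.2 _) (ent_unique hdist.2 _) hent (ent_unique hdist.2 _) ?_ ?_ ?_
  · exact (ent_comp_inj p (φ := fun a : Fin n => ((0 : Fin 1), a))
      (fun a b h => congrArg Prod.snd h) id).trans hent
  · exact (ent_comp_inj p (φ := fun a : Fin n => ((0 : Fin 1), a))
      (fun a b h => congrArg Prod.snd h) id).trans hent
  · exact (ent_comp_inj p (φ := fun a : Fin n => ((0 : Fin 1), (0 : Fin 1), a))
      (fun a b h => congrArg (fun u => u.2.2) h) id).trans hent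

lemma ent_of_pairSpace {m : ℕ} {A : Type} [Fintype A] [DecidableEq A]
    (Z : Fin m × Fin m → A) :
    ent (fun _ : Fin (m * m) => ((m:ℝ))⁻¹ * ((m:ℝ))⁻¹) (fun ω => Z (finProdFinEquiv.symm ω))
      = entG (fun _ : Fin m × Fin m => ((m:ℝ))⁻¹ * ((m:ℝ))⁻¹) Z := by
  rw [ent_eq_entG]
  rw [← entG_reindex (finProdFinEquiv : Fin m × Fin m ≃ Fin (m * m))
    (fun _ : Fin (m * m) => ((m:ℝ))⁻¹ * ((m:ℝ))⁻¹) (fun ω => Z (finProdFinEquiv.symm ω))]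
  simp only [Equiv.symm_apply_apply]

lemma isEntropic_logb_e123' (m : ℕ) (hm : 0 < m) :
    IsEntropic (Real.logb 2 (m : ℝ) • e123') := by
  haveI : NeZero m := ⟨hm.ne'⟩
  have hmR : (0:ℝ) < (m:ℝ) := by exact_mod_cast hm
  have hum1 : ∑ ω : Fin m, ((m:ℝ))⁻¹ = 1 := by
    rw [Finset.sum_const, Finset.card_univ, Fintype.card_fin, nsmul_eq_mul]
    field_simp
  have hidm : entG (fun _ : Fin m => ((m:ℝ))⁻¹) (id : Fin m → Fin m) = Real.logb 2 (m:ℝ) := by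
    rw [show (fun _ : Fin m => ((m:ℝ))⁻¹) = fun _ => ((Fintype.card (Fin m) : ℝ))⁻¹ by
      simp [Fintype.card_fin]]
    rw [entG_id_uniform (Fin m) (by simpa using hm)]
    simp [Fintype.card_fin]
  have hid : entG (fun _ : Fin m × Fin m => ((m:ℝ))⁻¹ * ((m:ℝ))⁻¹)
      (id : Fin m × Fin m → Fin m × Fin m) = Real.logb 2 (m:ℝ) * 2 := by
    rw [show (fun _ : Fin m × Fin m => ((m:ℝ))⁻¹ * ((m:ℝ))⁻¹)
        = fun _ => ((Fintype.card (Fin m × Fin m) : ℝ))⁻¹ by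
      funext ω
      simp only [Fintype.card_prod, Fintype.card_fin]
      push_cast
      rw [mul_inv]]
    rw [entG_id_uniform (Fin m × Fin m) (by simp [Fintype.card_prod, Fintype.card_fin]; positivity)]
    simp only [Fintype.card_prod, Fintype.card_fin]
    push_cast
    rw [Real.logb_mul hmR.ne' hmR.ne']
    ring
  have cA : entG (fun _ : Fin m × Fin m => ((m:ℝ))⁻¹ * ((m:ℝ))⁻¹)
      (fun ω => ω.1) = Real.logb 2 (m:ℝ) :=
    (entG_fst (fun _ : Fin m => ((m:ℝ))⁻¹) hum1 (id : Fin m → Fin m)).trans hidm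
  have cB : entG (fun _ : Fin m × Fin m => ((m:ℝ))⁻¹ * ((m:ℝ))⁻¹)
      (fun ω => ω.2) = Real.logb 2 (m:ℝ) :=
    (entG_snd hum1 (fun _ : Fin m => ((m:ℝ))⁻¹) (id : Fin m → Fin m)).trans hidm
  have cC : entG (fun _ : Fin m × Fin m => ((m:ℝ))⁻¹ * ((m:ℝ))⁻¹)
      (fun ω => ω.1 + ω.2) = Real.logb 2 (m:ℝ) := by
    have h := entG_reindex
      (⟨fun ω : Fin m × Fin m => (ω.1, ω.2 - ω.1), fun ω => (ω.1, ω.2 + ω.1),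
        fun ω => Prod.ext_iff.mpr ⟨rfl, by show ω.2 - ω.1 + ω.1 = ω.2; abel⟩,
        fun ω => Prod.ext_iff.mpr ⟨rfl, by show ω.2 + ω.1 - ω.1 = ω.2; abel⟩⟩ :
        Fin m × Fin m ≃ Fin m × Fin m)
      (fun _ : Fin m × Fin m => ((m:ℝ))⁻¹ * ((m:ℝ))⁻¹) (fun ω => ω.1 + ω.2)
    rw [← h]
    simp only [Equiv.coe_fn_mk]
    have hT : (fun ω' : Fin m × Fin m => ((ω'.1, ω'.2 - ω'.1) : Fin m × Fin m).1
        + ((ω'.1, ω'.2 - ω'.1) : Fin m × Fin m).2) = fun ω' : Fin m × Fin m => ω'.2 := by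
      funext ω'
      show ω'.1 + (ω'.2 - ω'.1) = ω'.2
      abel
    rw [hT]
    exact cB
  have cD : entG (fun _ : Fin m × Fin m => ((m:ℝ))⁻¹ * ((m:ℝ))⁻¹)
      (fun ω => (ω.1, ω.2)) = Real.logb 2 (m:ℝ) * 2 := hid
  have cE : entG (fun _ : Fin m × Fin m => ((m:ℝ))⁻¹ * ((m:ℝ))⁻¹)
      (fun ω => (ω.1, ω.1 + ω.2)) = Real.logb 2 (m:ℝ) * 2 := by
    have hφ : Injective (fun v : Fin m × Fin m => (v.1, v.1 + v.2)) := by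
      intro ⟨a, b⟩ ⟨c, d⟩ h
      simp only [Prod.mk.injEq] at h ⊢
      obtain ⟨h1, h2⟩ := h
      subst h1
      exact ⟨rfl, add_left_cancel h2⟩
    exact (entG_comp_inj _ hφ (id : Fin m × Fin m → Fin m × Fin m)).trans hid
  have cF : entG (fun _ : Fin m × Fin m => ((m:ℝ))⁻¹ * ((m:ℝ))⁻¹)
      (fun ω => (ω.2, ω.1 + ω.2)) = Real.logb 2 (m:ℝ) * 2 := by
    have hφ : Injective (fun v : Fin m × Fin m => (v.2, v.1 + v.2)) := by
      intro ⟨a, b⟩ ⟨c, d⟩ h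
      simp only [Prod.mk.injEq] at h ⊢
      obtain ⟨h1, h2⟩ := h
      subst h1
      exact ⟨add_right_cancel h2, rfl⟩
    exact (entG_comp_inj _ hφ (id : Fin m × Fin m → Fin m × Fin m)).trans hid
  have cG : entG (fun _ : Fin m × Fin m => ((m:ℝ))⁻¹ * ((m:ℝ))⁻¹)
      (fun ω => (ω.1, ω.2, ω.1 + ω.2)) = Real.logb 2 (m:ℝ) * 2 := by
    have hφ : Injective (fun v : Fin m × Fin m => (v.1, v.2, v.1 + v.2)) := by
      intro ⟨a, b⟩ ⟨c, d⟩ h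
      simp only [Prod.mk.injEq] at h ⊢
      exact ⟨h.1, h.2.1⟩
    exact (entG_comp_inj _ hφ (id : Fin m × Fin m → Fin m × Fin m)).trans hid
  refine ⟨m * m, m, m, m, fun _ => ((m:ℝ))⁻¹ * ((m:ℝ))⁻¹,
    fun ω => (finProdFinEquiv.symm ω).1, fun ω => (finProdFinEquiv.symm ω).2,
    fun ω => (finProdFinEquiv.symm ω).1 + (finProdFinEquiv.symm ω).2, ⟨?_, ?_⟩, ?_⟩
  · intro ω
    positivity
  · rw [Finset.sum_const, Finset.card_univ, Fintype.card_fin, nsmul_eq_mul]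
    push_cast
    field_simp
  · rw [show Real.logb 2 (m : ℝ) • e123'
        = ![Real.logb 2 (m:ℝ), Real.logb 2 (m:ℝ), Real.logb 2 (m:ℝ), Real.logb 2 (m:ℝ) * 2,
            Real.logb 2 (m:ℝ) * 2, Real.logb 2 (m:ℝ) * 2, Real.logb 2 (m:ℝ) * 2] by
      simp only [e123', Matrix.smul_cons, Matrix.smul_empty, smul_eq_mul, mul_one]]
    refine entVec3_eq _ _ _ _ _ _ _ _ _ _ _ ?_ ?_ ?_ ?_ ?_ ?_ ?_
    · exact (ent_of_pairSpace (fun v => v.1)).trans cA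
    · exact (ent_of_pairSpace (fun v => v.2)).trans cB
    · exact (ent_of_pairSpace (fun v => v.1 + v.2)).trans cC
    · exact (ent_of_pairSpace (fun v => (v.1, v.2))).trans cD
    · exact (ent_of_pairSpace (fun v => (v.1, v.1 + v.2))).trans cE
    · exact (ent_of_pairSpace (fun v => (v.2, v.1 + v.2))).trans cF
    · exact (ent_of_pairSpace (fun v => (v.1, v.2, v.1 + v.2))).trans cG

/-- For λ₁, λ₂, λ₃ ≥ 0 and m a positive integer,
λ₁·e₁ + λ₂·e₂ + λ₃·e₃ + (log₂ m)·e₁₂₃' is an entropy vector. -/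
theorem stmt5 (l1 l2 l3 : ℝ) (h1 : 0 ≤ l1) (h2 : 0 ≤ l2) (h3 : 0 ≤ l3)
    (m : ℕ) (hm : 0 < m) :
    IsEntropic (l1 • e1 + l2 • e2 + l3 • e3 + Real.logb 2 (m : ℝ) • e123') :=
  isEntropic_add (isEntropic_add (isEntropic_add (isEntropic_smul_e1 l1 h1)
    (isEntropic_smul_e2 l2 h2)) (isEntropic_smul_e3 l3 h3)) (isEntropic_logb_e123' m hm)
end Lemmas
end

section
/- There exists a quasi-uniform random vector (X_1, X_2, X_3), with each X_i taking values in a 4-element alphabet, such that each X_i is uniformly distributed on its 4-element alphabet, each pair (X_i, X_j) with i ≠ j is uniformly distributed on all 16 pairs of values, and the joint distribution of (X_1, X_2, X_3) is uniform on a support of exactly 48 triples; consequently its entropy vector equals f = (2, 2, 2, 4, 4, 4, log₂ 48). -/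
open Finset

/-- The random variable `X` is quasi-uniform: there is a constant `q ∈ (0,1]` such that
every point probability is either `0` or `q`. -/
def QU {N : ℕ} (p : Fin N → ℝ) {A : Type} [DecidableEq A] (X : Fin N → A) : Prop :=
  ∃ q : ℝ, 0 < q ∧ q ≤ 1 ∧ ∀ a, pr p X a = 0 ∨ pr p X a = q

/-- The random vector (X₁,X₂,X₃) is quasi-uniform: every one of the seven nonempty
sub-vectors is quasi-uniform. -/
def QuasiUniform3 {N a₁ a₂ a₃ : ℕ} (p : Fin N → ℝ)
    (X₁ : Fin N → Fin a₁) (X₂ : Fin N → Fin a₂) (X₃ : Fin N → Fin a₃) : Prop :=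
  QU p X₁ ∧ QU p X₂ ∧ QU p X₃ ∧
  QU p (fun ω => (X₁ ω, X₂ ω)) ∧ QU p (fun ω => (X₁ ω, X₃ ω)) ∧
  QU p (fun ω => (X₂ ω, X₃ ω)) ∧ QU p (fun ω => (X₁ ω, X₂ ω, X₃ ω))



section Aux

lemma pr_count' {N : ℕ} (c : Fin N → Prop) [DecidablePred c] (r : ℝ) {A : Type} [DecidableEq A]
    (X : Fin N → A) (a : A) :
    (∑ ω, if X ω = a then (if c ω then r else 0) else 0)
      = ((univ.filter (fun ω => X ω = a ∧ c ω)).card : ℝ) * r := by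
  have : ∀ ω : Fin N, (if X ω = a then (if c ω then r else 0) else 0)
      = (if X ω = a ∧ c ω then r else 0) := by
    intro ω
    by_cases h1 : X ω = a <;> by_cases h2 : c ω <;> simp [h1, h2]
  rw [Finset.sum_congr rfl (fun ω _ => this ω), Finset.sum_ite, Finset.sum_const,
    Finset.sum_const_zero, add_zero, nsmul_eq_mul]

end Aux

def cnd (ω : Fin 64) : Prop := (ω.val / 16 + ω.val / 4 + ω.val) % 4 ≠ 0

instance : DecidablePred cnd := fun ω => by unfold cnd; infer_instance

noncomputable def pp : Fin 64 → ℝ := fun ω => if cnd ω then 1/48 else 0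

def Y₁ : Fin 64 → Fin 4 := fun ω => ⟨ω.val / 16, by omega⟩
def Y₂ : Fin 64 → Fin 4 := fun ω => ⟨ω.val / 4 % 4, Nat.mod_lt _ (by norm_num)⟩
def Y₃ : Fin 64 → Fin 4 := fun ω => ⟨ω.val % 4, Nat.mod_lt _ (by norm_num)⟩

lemma pr_pp {A : Type} [DecidableEq A] (X : Fin 64 → A) (a : A) :
    pr pp X a = ((univ.filter (fun ω => X ω = a ∧ cnd ω)).card : ℝ) * (1/48) :=
  pr_count' cnd (1/48) X a

lemma h1 : ∀ a, pr pp Y₁ a = 1/4 := by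
  intro a
  rw [pr_pp, show (univ.filter (fun ω => Y₁ ω = a ∧ cnd ω)).card = 12 by revert a; decide]
  norm_num

lemma h2 : ∀ a, pr pp Y₂ a = 1/4 := by
  intro a
  rw [pr_pp, show (univ.filter (fun ω => Y₂ ω = a ∧ cnd ω)).card = 12 by revert a; decide]
  norm_num

lemma h3 : ∀ a, pr pp Y₃ a = 1/4 := by
  intro a
  rw [pr_pp, show (univ.filter (fun ω => Y₃ ω = a ∧ cnd ω)).card = 12 by revert a; decide]
  norm_num

lemma h12 : ∀ x, pr pp (fun ω => (Y₁ ω, Y₂ ω)) x = 1/16 := by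
  intro x
  rw [pr_pp, show (univ.filter (fun ω => (Y₁ ω, Y₂ ω) = x ∧ cnd ω)).card = 3 by revert x; decide]
  norm_num

lemma h13 : ∀ x, pr pp (fun ω => (Y₁ ω, Y₃ ω)) x = 1/16 := by
  intro x
  rw [pr_pp, show (univ.filter (fun ω => (Y₁ ω, Y₃ ω) = x ∧ cnd ω)).card = 3 by revert x; decide]
  norm_num

lemma h23 : ∀ x, pr pp (fun ω => (Y₂ ω, Y₃ ω)) x = 1/16 := by
  intro x
  rw [pr_pp, show (univ.filter (fun ω => (Y₂ ω, Y₃ ω) = x ∧ cnd ω)).card = 3 by revert x; decide]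
  norm_num

def cnd3 (x : Fin 4 × Fin 4 × Fin 4) : Prop := (x.1.val + x.2.1.val + x.2.2.val) % 4 ≠ 0

instance : DecidablePred cnd3 := fun x => by unfold cnd3; infer_instance

lemma h123 : ∀ x, pr pp (fun ω => (Y₁ ω, Y₂ ω, Y₃ ω)) x = if cnd3 x then 1/48 else 0 := by
  intro x
  rw [pr_pp, show (univ.filter (fun ω => (Y₁ ω, Y₂ ω, Y₃ ω) = x ∧ cnd ω)).card
      = if cnd3 x then 1 else 0 by revert x; decide]
  split <;> norm_num

lemma logb2 : Real.logb 2 2 = 1 := by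
  have h := Real.log_pos (by norm_num : (1:ℝ) < 2)
  rw [Real.logb, div_self h.ne']

lemma logb_quarter : Real.logb 2 (1/4 : ℝ) = -2 := by
  rw [show (1/4 : ℝ) = ((2:ℝ)^(2:ℕ))⁻¹ by norm_num, Real.logb_inv, Real.logb_pow, logb2]
  norm_num

lemma logb_sixteenth : Real.logb 2 (1/16 : ℝ) = -4 := by
  rw [show (1/16 : ℝ) = ((2:ℝ)^(4:ℕ))⁻¹ by norm_num, Real.logb_inv, Real.logb_pow, logb2]
  norm_num

lemma logb_48 : Real.logb 2 (1/48 : ℝ) = -Real.logb 2 48 := by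
  rw [one_div, Real.logb_inv]

lemma ent1 : ent pp Y₁ = 2 := by
  unfold ent
  simp only [h1, logb_quarter, Finset.sum_const, Finset.card_univ, Fintype.card_fin]
  norm_num

lemma ent2 : ent pp Y₂ = 2 := by
  unfold ent
  simp only [h2, logb_quarter, Finset.sum_const, Finset.card_univ, Fintype.card_fin]
  norm_num

lemma ent3 : ent pp Y₃ = 2 := by
  unfold ent
  simp only [h3, logb_quarter, Finset.sum_const, Finset.card_univ, Fintype.card_fin]
  norm_num

lemma ent12 : ent pp (fun ω => (Y₁ ω, Y₂ ω)) = 4 := by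
  unfold ent
  simp only [h12, logb_sixteenth, Finset.sum_const, Finset.card_univ]
  simp [Fintype.card_prod]

lemma ent13 : ent pp (fun ω => (Y₁ ω, Y₃ ω)) = 4 := by
  unfold ent
  simp only [h13, logb_sixteenth, Finset.sum_const, Finset.card_univ]
  simp [Fintype.card_prod]

lemma ent23 : ent pp (fun ω => (Y₂ ω, Y₃ ω)) = 4 := by
  unfold ent
  simp only [h23, logb_sixteenth, Finset.sum_const, Finset.card_univ]
  simp [Fintype.card_prod]

lemma ent123 : ent pp (fun ω => (Y₁ ω, Y₂ ω, Y₃ ω)) = Real.logb 2 48 := by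
  unfold ent
  simp only [h123]
  have : ∀ x : Fin 4 × Fin 4 × Fin 4,
      (if cnd3 x then (1/48 : ℝ) else 0) * Real.logb 2 (if cnd3 x then (1/48 : ℝ) else 0)
      = (if cnd3 x then (1/48 : ℝ) * Real.logb 2 (1/48) else 0) := by
    intro x; split <;> simp
  rw [Finset.sum_congr rfl (fun x _ => this x), Finset.sum_ite, Finset.sum_const,
    Finset.sum_const_zero, add_zero, nsmul_eq_mul,
    show (univ.filter cnd3).card = 48 by decide, logb_48]
  push_cast
  ring


/-- There is a quasi-uniform triple on 4-element alphabets, with uniform singletons,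
uniform pairs on all 16 values, and joint distribution uniform on a support of exactly
48 triples; its entropy vector is (2,2,2,4,4,4, log₂ 48). -/
theorem stmt6 :
    ∃ (N : ℕ) (p : Fin N → ℝ) (X₁ X₂ X₃ : Fin N → Fin 4),
      IsDist p ∧ QuasiUniform3 p X₁ X₂ X₃ ∧
      (∀ a, pr p X₁ a = 1/4) ∧ (∀ a, pr p X₂ a = 1/4) ∧ (∀ a, pr p X₃ a = 1/4) ∧
      (∀ x, pr p (fun ω => (X₁ ω, X₂ ω)) x = 1/16) ∧
      (∀ x, pr p (fun ω => (X₁ ω, X₃ ω)) x = 1/16) ∧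
      (∀ x, pr p (fun ω => (X₂ ω, X₃ ω)) x = 1/16) ∧
      {x | pr p (fun ω => (X₁ ω, X₂ ω, X₃ ω)) x ≠ 0}.ncard = 48 ∧
      (∀ x, pr p (fun ω => (X₁ ω, X₂ ω, X₃ ω)) x = 0 ∨
            pr p (fun ω => (X₁ ω, X₂ ω, X₃ ω)) x = 1/48) ∧
      entVec3 p X₁ X₂ X₃ = ![2, 2, 2, 4, 4, 4, Real.logb 2 48] := by
  refine ⟨64, pp, Y₁, Y₂, Y₃, ?_, ?_, h1, h2, h3, h12, h13, h23, ?_, ?_, ?_⟩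
  · constructor
    · intro ω
      unfold pp
      split <;> norm_num
    · show (∑ ω, if cnd ω then (1/48 : ℝ) else 0) = 1
      rw [Finset.sum_ite, Finset.sum_const, Finset.sum_const_zero, add_zero, nsmul_eq_mul,
        show (univ.filter (fun ω : Fin 64 => cnd ω)).card = 48 by decide]
      norm_num
  · refine ⟨⟨1/4, by norm_num, by norm_num, fun a => Or.inr (h1 a)⟩,
      ⟨1/4, by norm_num, by norm_num, fun a => Or.inr (h2 a)⟩,
      ⟨1/4, by norm_num, by norm_num, fun a => Or.inr (h3 a)⟩,
      ⟨1/16, by norm_num, by norm_num, fun x => Or.inr (h12 x)⟩,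
      ⟨1/16, by norm_num, by norm_num, fun x => Or.inr (h13 x)⟩,
      ⟨1/16, by norm_num, by norm_num, fun x => Or.inr (h23 x)⟩,
      ⟨1/48, by norm_num, by norm_num, fun x => ?_⟩⟩
    rw [h123]
    split
    · exact Or.inr rfl
    · exact Or.inl rfl
  · have hset : {x | pr pp (fun ω => (Y₁ ω, Y₂ ω, Y₃ ω)) x ≠ 0}
        = ↑(univ.filter cnd3) := by
      ext x
      simp only [Set.mem_setOf_eq, h123, Finset.coe_filter, Finset.mem_univ, true_and]
      split <;> simp_all
    rw [hset, Set.ncard_coe_finset, show (univ.filter cnd3).card = 48 by decide]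
  · intro x
    rw [h123]
    split
    · exact Or.inr rfl
    · exact Or.inl rfl
  · unfold entVec3
    rw [ent1, ent2, ent3, ent12, ent13, ent23, ent123]
end

section
/- There do not exist real numbers λ_1, λ_2, λ_3 ≥ 0 and a positive integer m such that (2, 2, 2, 4, 4, 4, log₂ 48) = λ_1·e_1 + λ_2·e_2 + λ_3·e_3 + (log₂ m)·e_{123'} in ℝ^7. -/
open Finset

/-- There are no λ₁, λ₂, λ₃ ≥ 0 and positive integer m with
(2,2,2,4,4,4,log₂48) = λ₁e₁ + λ₂e₂ + λ₃e₃ + (log₂ m)e₁₂₃'. -/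
theorem stmt8 :
    ¬∃ (l1 l2 l3 : ℝ) (m : ℕ), 0 ≤ l1 ∧ 0 ≤ l2 ∧ 0 ≤ l3 ∧ 0 < m ∧
      (![2, 2, 2, 4, 4, 4, Real.logb 2 48] : Fin 7 → ℝ) =
        l1 • e1 + l2 • e2 + l3 • e3 + Real.logb 2 (m : ℝ) • e123' := by
  rintro ⟨l1, l2, l3, m, h1, h2, h3, hm, heq⟩
  have c0 : (2 : ℝ) = l1 * 1 + l2 * 0 + l3 * 0 + Real.logb 2 (m : ℝ) * 1 := congrFun heq 0
  have c1 : (2 : ℝ) = l1 * 0 + l2 * 1 + l3 * 0 + Real.logb 2 (m : ℝ) * 1 := congrFun heq 1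
  have c2 : (2 : ℝ) = l1 * 0 + l2 * 0 + l3 * 1 + Real.logb 2 (m : ℝ) * 1 := congrFun heq 2
  have c6 : Real.logb 2 48 = l1 * 1 + l2 * 1 + l3 * 1 + Real.logb 2 (m : ℝ) * 2 := congrFun heq 6
  set L := Real.logb 2 (m : ℝ) with hL
  have key : Real.logb 2 48 + L = 6 := by linarith
  have hmpos : (0 : ℝ) < (m : ℝ) := by exact_mod_cast hm
  have hmul : Real.logb 2 (48 * m) = Real.logb 2 48 + L := by
    rw [hL]; exact Real.logb_mul (by norm_num) (ne_of_gt hmpos)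
  have h48 : (48 * m : ℝ) = 64 := by
    have hpos : (0 : ℝ) < 48 * m := by positivity
    have := Real.rpow_logb (by norm_num : (0:ℝ) < 2) (by norm_num) hpos
    rw [hmul, key] at this
    have h26 : (2 : ℝ) ^ (6 : ℝ) = 64 := by
      rw [show (6:ℝ) = ((6:ℕ):ℝ) by norm_num, Real.rpow_natCast]; norm_num
    linarith [this, h26]
  have : 48 * m = 64 := by exact_mod_cast h48
  omega
end
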